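/- A differentiable function ξ : ℝ → ℝᵏ satisfying ξ̇(t) = a(t)Φ(ξ(t)) for all t ∈ ℝ is T-periodic if and only if ξ(0) ∈ ker(Id − exp(T·Φ)). Consequently, the equation ξ̇ = a(t)Φξ admits a nonzero T-periodic solution if and only if ker(Id − exp(T·Φ)) ≠ {0}. -/

import Mathlib

open NormedSpace intervalIntegral

section Aux

variable {k : ℕ}

private noncomputable def Aint (a : ℝ → ℝ) (t : ℝ) : ℝ := ∫ s in (0:ℝ)..t, a s

private lemma hasDerivAt_Aint {a : ℝ → ℝ} (ha : Continuous a) (t : ℝ) :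
    HasDerivAt (Aint a) (a t) t :=
  intervalIntegral.integral_hasDerivAt_right (ha.intervalIntegrable _ _)
    (ha.stronglyMeasurableAtFilter _ _) ha.continuousAt

private lemma expDeriv (Φ : (Fin k → ℝ) →L[ℝ] (Fin k → ℝ)) {c : ℝ → ℝ} {d t : ℝ}
    (hc : HasDerivAt c d t) :
    HasDerivAt (fun t => exp (c t • Φ)) (d • (exp (c t • Φ) * Φ)) t := by
  exact HasDerivAt.scomp (h := c) (x := t) (hasDerivAt_exp_smul_const (𝕂 := ℝ) Φ (c t)) hc

private lemma commΦ (Φ : (Fin k → ℝ) →L[ℝ] (Fin k → ℝ)) (s : ℝ) :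
    Commute Φ (exp (s • Φ)) :=
  ((Commute.refl Φ).smul_right s).exp_right

private lemma exp_neg_apply (Φ : (Fin k → ℝ) →L[ℝ] (Fin k → ℝ)) (s : ℝ) (v : Fin k → ℝ) :
    exp (s • Φ) (exp ((-s) • Φ) v) = v := by
  have h : exp (s • Φ) * exp ((-s) • Φ) = 1 := by
    rw [← NormedSpace.exp_add_of_commute_of_mem_ball (𝕂 := ℝ) (((Commute.refl Φ).smul_left s).smul_right (-s))
      ((expSeries_radius_eq_top ℝ ((Fin k → ℝ) →L[ℝ] (Fin k → ℝ))).symm ▸ edist_lt_top _ _) ((expSeries_radius_eq_top ℝ ((Fin k → ℝ) →L[ℝ] (Fin k → ℝ))).symm ▸ edist_lt_top _ _)]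
    rw [← add_smul, add_neg_cancel, zero_smul, NormedSpace.exp_zero]
  have := congrArg (fun (L : (Fin k → ℝ) →L[ℝ] (Fin k → ℝ)) => L v) h
  simpa using this

/-- Every solution has the explicit form. -/
private lemma sol_eq (Φ : (Fin k → ℝ) →L[ℝ] (Fin k → ℝ)) {a : ℝ → ℝ} (ha : Continuous a)
    {ξ : ℝ → (Fin k → ℝ)} (hξ : ∀ t : ℝ, HasDerivAt ξ (a t • Φ (ξ t)) t) (t : ℝ) :
    ξ t = exp ((Aint a t) • Φ) (ξ 0) := by
  set g : ℝ → (Fin k → ℝ) := fun t => exp ((-(Aint a t)) • Φ) (ξ t) with hg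
  have hgd : ∀ t, HasDerivAt g 0 t := by
    intro t
    have hc : HasDerivAt (fun t => -(Aint a t)) (-(a t)) t := (hasDerivAt_Aint ha t).neg
    have hE := expDeriv Φ hc
    have h := hE.clm_apply (hξ t)
    refine h.congr_deriv ?_
    simp only [ContinuousLinearMap.smul_apply, ContinuousLinearMap.mul_apply,
      ContinuousLinearMap.map_smul]
    module
  have hconst : g t = g 0 := by
    apply is_const_of_deriv_eq_zero (fun t => (hgd t).differentiableAt)
    intro x; exact (hgd x).deriv
  have h0 : g 0 = ξ 0 := by simp [hg, Aint]
  have := congrArg (fun v => exp ((Aint a t) • Φ) v) (hconst.trans h0)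
  simpa [hg, exp_neg_apply] using this

/-- The explicit form is a solution. -/
private lemma sol_exists (Φ : (Fin k → ℝ) →L[ℝ] (Fin k → ℝ)) {a : ℝ → ℝ} (ha : Continuous a)
    (v : Fin k → ℝ) (t : ℝ) :
    HasDerivAt (fun t => exp ((Aint a t) • Φ) v) (a t • Φ (exp ((Aint a t) • Φ) v)) t := by
  have hE := expDeriv Φ (hasDerivAt_Aint ha t)
  have h := hE.clm_apply (hasDerivAt_const t v)
  refine h.congr_deriv ?_
  rw [← (commΦ Φ (Aint a t)).eq]
  simp

end Aux

/-- A solution of `ξ̇ = a(t)Φξ` is `T`-periodic iff `ξ(0) ∈ ker(Id − exp(T·Φ))`; consequently,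
there is a nonzero `T`-periodic solution iff `ker(Id − exp(T·Φ)) ≠ {0}`. -/
theorem stmt7 {k : ℕ}
    (Φ : (Fin k → ℝ) →L[ℝ] (Fin k → ℝ))
    (T : ℝ) (hT : 0 < T)
    (a : ℝ → ℝ) (ha : Continuous a) (haT : Function.Periodic a T)
    (hint : (∫ s in (0:ℝ)..T, a s) = T) :
    (∀ ξ : ℝ → (Fin k → ℝ),
      (∀ t : ℝ, HasDerivAt ξ (a t • Φ (ξ t)) t) →
      (Function.Periodic ξ T ↔
        ξ 0 ∈ LinearMap.ker
          ((ContinuousLinearMap.id ℝ (Fin k → ℝ) - NormedSpace.exp (T • Φ) :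
            (Fin k → ℝ) →L[ℝ] (Fin k → ℝ)) : (Fin k → ℝ) →ₗ[ℝ] (Fin k → ℝ)))) ∧
    ((∃ ξ : ℝ → (Fin k → ℝ),
        (∀ t : ℝ, HasDerivAt ξ (a t • Φ (ξ t)) t) ∧ Function.Periodic ξ T ∧ ξ ≠ 0) ↔
      LinearMap.ker
        ((ContinuousLinearMap.id ℝ (Fin k → ℝ) - NormedSpace.exp (T • Φ) :
          (Fin k → ℝ) →L[ℝ] (Fin k → ℝ)) : (Fin k → ℝ) →ₗ[ℝ] (Fin k → ℝ)) ≠ ⊥) := by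
  have hAT : Aint a T = T := hint
  have hAadd : ∀ t : ℝ, Aint a (t + T) = T + Aint a t := by
    intro t
    have h1 : Aint a (t + T) = Aint a T + ∫ s in T..(t + T), a s := by
      rw [Aint, Aint, intervalIntegral.integral_add_adjacent_intervals
        (ha.intervalIntegrable _ _) (ha.intervalIntegrable _ _)]
    have h2 : (∫ s in T..(t + T), a s) = ∫ s in (0:ℝ)..t, a s := by
      have h3 := intervalIntegral.integral_comp_add_right (a := (0:ℝ)) (b := t) (f := a) T
      rw [zero_add] at h3
      rw [← h3]
      exact intervalIntegral.integral_congr fun s _ => haT s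
    rw [h1, h2, hAT, Aint]
  -- key characterization
  have key : ∀ ξ : ℝ → (Fin k → ℝ),
      (∀ t : ℝ, HasDerivAt ξ (a t • Φ (ξ t)) t) →
      (Function.Periodic ξ T ↔
        ξ 0 ∈ LinearMap.ker
          ((ContinuousLinearMap.id ℝ (Fin k → ℝ) - NormedSpace.exp (T • Φ) :
            (Fin k → ℝ) →L[ℝ] (Fin k → ℝ)) : (Fin k → ℝ) →ₗ[ℝ] (Fin k → ℝ))) := by
    intro ξ hξ
    have hform := sol_eq Φ ha hξ
    constructor
    · intro hper
      have hTeq : ξ T = ξ 0 := by simpa using hper 0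
      have h1 := hform T
      rw [hAT] at h1
      have : exp (T • Φ) (ξ 0) = ξ 0 := by rw [← h1]; exact hTeq
      simp [LinearMap.mem_ker, sub_eq_zero, this]
    · intro hker
      have hfix : exp (T • Φ) (ξ 0) = ξ 0 := by
        rw [LinearMap.mem_ker] at hker
        have h2 : ξ 0 - exp (T • Φ) (ξ 0) = 0 := by simpa using hker
        exact (sub_eq_zero.mp h2).symm
      intro t
      rw [hform (t + T), hform t, hAadd t]
      have : exp ((T + Aint a t) • Φ) = exp (Aint a t • Φ) * exp (T • Φ) := by
        rw [add_comm T, add_smul,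
          NormedSpace.exp_add_of_commute_of_mem_ball (𝕂 := ℝ) (((Commute.refl Φ).smul_left (Aint a t)).smul_right T)
            ((expSeries_radius_eq_top ℝ ((Fin k → ℝ) →L[ℝ] (Fin k → ℝ))).symm ▸ edist_lt_top _ _) ((expSeries_radius_eq_top ℝ ((Fin k → ℝ) →L[ℝ] (Fin k → ℝ))).symm ▸ edist_lt_top _ _)]
      rw [this]
      simp [hfix]
  refine ⟨key, ?_, ?_⟩
  · rintro ⟨ξ, hξ, hper, hne⟩
    have h0 : ξ 0 ∈ LinearMap.ker
        ((ContinuousLinearMap.id ℝ (Fin k → ℝ) - NormedSpace.exp (T • Φ) :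
            (Fin k → ℝ) →L[ℝ] (Fin k → ℝ)) : (Fin k → ℝ) →ₗ[ℝ] (Fin k → ℝ)) :=
      (key ξ hξ).mp hper
    intro hbot
    apply hne
    have hz : ξ 0 = 0 := by rw [hbot] at h0; simpa using h0
    funext t
    rw [sol_eq Φ ha hξ t, hz]
    simp
  · intro hne
    obtain ⟨v, hv, hv0⟩ : ∃ v, v ∈ LinearMap.ker
        ((ContinuousLinearMap.id ℝ (Fin k → ℝ) - NormedSpace.exp (T • Φ) :
            (Fin k → ℝ) →L[ℝ] (Fin k → ℝ)) : (Fin k → ℝ) →ₗ[ℝ] (Fin k → ℝ)) ∧ v ≠ 0 :=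
      Submodule.exists_mem_ne_zero_of_ne_bot hne
    refine ⟨fun t => exp ((Aint a t) • Φ) v, fun t => sol_exists Φ ha v t, ?_, ?_⟩
    · have h0 : exp ((Aint a 0) • Φ) v = v := by simp [Aint]
      have := (key _ (fun t => sol_exists Φ ha v t)).mpr
      apply this
      simpa [h0] using hv
    · intro hzero
      apply hv0
      have := congrFun hzero 0
      simpa [Aint] using this
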